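/- Let m ≥ 2 and n = 2^{m+1} - 4. With P_i ∈ ℤ/2[w2,w3] defined as the sum of monomials w2^p w3^{(2^i+n+1-2p)/3} over p whose m-bit binary expansion is (q, 0,...,0) (i trailing zeros) with q ∈ Δ_{m-i}, the leading term of P_i under the lexicographic order with w2 > w3 is w2^{2^m - 2^i} w3^{2^i - 1}. -/

import Mathlib

open MvPolynomial

/-- `InDelta k p` : the `k`-bit binary string of `p` lies in `Δ_k`
(convention `p_{-1} = 1`): whenever `p_{l-1} = 1` and `p_l = ⋯ = p_{l+2t} = 0`,
then `p_{l+2t+1} = 0`. -/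
def InDelta (k p : ℕ) : Prop :=
  ∀ l t : ℕ, l + 2 * t + 1 ≤ k - 1 →
    (l = 0 ∨ p.testBit (l - 1) = true) →
    (∀ j, l ≤ j → j ≤ l + 2 * t → p.testBit j = false) →
    p.testBit (l + 2 * t + 1) = false

open scoped Classical in
/-- The polynomial `P_i = Σ w2^p w3^((2^i + n + 1 - 2p)/3)` (with
`n = 2^(m+1) - 4`), summed over all `p < 2^m` whose `m`-bit binary expansion
has `i` trailing zeros followed by a string in `Δ_{m-i}`, and such that
`2^i + n + 1 - 2p` is divisible by `3`.  Here `X 0 = w2`, `X 1 = w3`. -/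
noncomputable def Ppoly (m i : ℕ) : MvPolynomial (Fin 2) (ZMod 2) :=
  ∑ p ∈ (Finset.range (2 ^ m)).filter
      (fun p => 2 ^ i ∣ p ∧ InDelta (m - i) (p / 2 ^ i) ∧
        3 ∣ (2 ^ i + (2 ^ (m + 1) - 4) + 1 - 2 * p)),
    X 0 ^ p * X 1 ^ ((2 ^ i + (2 ^ (m + 1) - 4) + 1 - 2 * p) / 3)

/-- The exponent pair `(deg_{w2}, deg_{w3})` of a monomial, in the
lexicographic order with `w2 > w3`. -/
def expPair (d : Fin 2 →₀ ℕ) : ℕ ×ₗ ℕ := toLex (d 0, d 1)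

/-- The leading exponent of a polynomial: the lexicographically largest
exponent pair in its support (and `(0,0)` for the zero polynomial). -/
noncomputable def leadExp (f : MvPolynomial (Fin 2) (ZMod 2)) : ℕ × ℕ :=
  ofLex (((f.support.image expPair).max).unbotD (toLex (0, 0)))


lemma inDelta_allones (k : ℕ) : InDelta k (2 ^ k - 1) := by
  intro l t hlt _ h2
  have hl : l < k := by omega
  have := h2 l le_rfl (by omega)
  rw [Nat.testBit_two_pow_sub_one] at this
  simp [hl] at this

/-- For `m ≥ 2` and `i ≤ m`, the leading term of `P_i` (lexicographic order
with `w2 > w3`) is the monomial `w2^(2^m - 2^i) * w3^(2^i - 1)`: this monomial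
occurs in `P_i` and its exponent pair is the leading exponent. -/
theorem leadTerm_Ppoly (m : ℕ) (hm : 2 ≤ m) (i : ℕ) (hi : i ≤ m) :
    (Finsupp.single (0 : Fin 2) (2 ^ m - 2 ^ i) +
        Finsupp.single (1 : Fin 2) (2 ^ i - 1)) ∈ (Ppoly m i).support ∧
      leadExp (Ppoly m i) = (2 ^ m - 2 ^ i, 2 ^ i - 1) := by
  classical
  have h2i : (2:ℕ)^i ≤ 2^m := Nat.pow_le_pow_right (by norm_num) hi
  have h1i : 1 ≤ (2:ℕ)^i := Nat.one_le_two_pow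
  have hmm : (2:ℕ)^(m+1) = 2 * 2^m := by ring
  have h4 : 4 ≤ (2:ℕ)^(m+1) := by
    calc (4:ℕ) = 2^2 := rfl
    _ ≤ 2^(m+1) := Nat.pow_le_pow_right (by norm_num) (by omega)
  have hpow : (2:ℕ)^i * 2^(m-i) = 2^m := by
    rw [← pow_add]; congr 1; omega
  set Q : ℕ → ℕ := fun p => (2 ^ i + (2 ^ (m + 1) - 4) + 1 - 2 * p) / 3 with hQ
  set d : ℕ → (Fin 2 →₀ ℕ) := fun p =>
    Finsupp.single 0 p + Finsupp.single 1 (Q p) with hd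
  set p0 := 2^m - 2^i with hp0
  have harith : 2 ^ i + (2 ^ (m + 1) - 4) + 1 - 2 * p0 = 3 * (2^i - 1) := by omega
  have hQ0 : Q p0 = 2^i - 1 := by
    rw [hQ]; simp only [harith]; exact Nat.mul_div_cancel_left _ (by norm_num)
  have hPp : Ppoly m i = ∑ p ∈ (Finset.range (2 ^ m)).filter
      (fun p => 2 ^ i ∣ p ∧ InDelta (m - i) (p / 2 ^ i) ∧
        3 ∣ (2 ^ i + (2 ^ (m + 1) - 4) + 1 - 2 * p)),
      monomial (d p) (1 : ZMod 2) := by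
    rw [Ppoly]
    apply Finset.sum_congr (by simp) fun p _ => ?_
    rw [X_pow_eq_monomial, X_pow_eq_monomial, monomial_mul, one_mul]
  have hdvd : (2:ℕ)^i ∣ p0 := ⟨2^(m-i) - 1, by rw [Nat.mul_sub, mul_one, hpow]⟩
  have hmem : p0 ∈ (Finset.range (2 ^ m)).filter
      (fun p => 2 ^ i ∣ p ∧ InDelta (m - i) (p / 2 ^ i) ∧
        3 ∣ (2 ^ i + (2 ^ (m + 1) - 4) + 1 - 2 * p)) := by
    rw [Finset.mem_filter, Finset.mem_range]
    refine ⟨by omega, hdvd, ?_, harith ▸ ⟨_, rfl⟩⟩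
    have : p0 / 2^i = 2^(m-i) - 1 := by
      obtain ⟨c, hc⟩ := hdvd
      rw [hc, Nat.mul_div_cancel_left _ (by positivity)]
      have : (2:ℕ)^i * c = 2^i * (2^(m-i) - 1) := by
        rw [← hc, Nat.mul_sub, mul_one, hpow]
      exact Nat.eq_of_mul_eq_mul_left (by positivity) this
    rw [this]
    exact inDelta_allones _
  have hdinj : ∀ p p' : ℕ, d p = d p' → p = p' := by
    intro p p' h
    have := congrArg (fun f => f 0) h
    simpa [hd, Finsupp.single_apply] using this
  have hcoeff : coeff (d p0) (Ppoly m i) = 1 := by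
    rw [hPp, coeff_sum, Finset.sum_eq_single p0]
    · rw [coeff_monomial, if_pos rfl]
    · intro b _ hne
      rw [coeff_monomial, if_neg (fun h => hne (hdinj _ _ h))]
    · intro h; exact absurd hmem h
  have hsupmem : d p0 ∈ (Ppoly m i).support := by
    rw [mem_support_iff, hcoeff]; exact one_ne_zero
  have hgoal1 : d p0 = Finsupp.single (0 : Fin 2) (2 ^ m - 2 ^ i) +
      Finsupp.single (1 : Fin 2) (2 ^ i - 1) := by
    rw [hd]; simp only [hQ0]; rfl
  have hsup : ∀ e ∈ (Ppoly m i).support, ∃ p, (p ∈ (Finset.range (2 ^ m)).filter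
      (fun p => 2 ^ i ∣ p ∧ InDelta (m - i) (p / 2 ^ i) ∧
        3 ∣ (2 ^ i + (2 ^ (m + 1) - 4) + 1 - 2 * p))) ∧ d p = e := by
    intro e he
    rw [mem_support_iff, hPp, coeff_sum] at he
    by_contra hcon
    push_neg at hcon
    exact he (Finset.sum_eq_zero fun p hp => by
      rw [coeff_monomial, if_neg (hcon p hp)])
  have hexp : ∀ p, expPair (d p) = toLex (p, Q p) := by
    intro p
    simp [expPair, hd, Finsupp.single_apply]
  have hle : ∀ p, p ∈ (Finset.range (2 ^ m)).filter
      (fun p => 2 ^ i ∣ p ∧ InDelta (m - i) (p / 2 ^ i) ∧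
        3 ∣ (2 ^ i + (2 ^ (m + 1) - 4) + 1 - 2 * p)) →
      expPair (d p) ≤ toLex (p0, 2^i - 1) := by
    intro p hp
    rw [Finset.mem_filter, Finset.mem_range] at hp
    obtain ⟨hlt, ⟨c, rfl⟩, -⟩ := hp
    have hc : c < 2^(m-i) := by
      apply Nat.lt_of_mul_lt_mul_left (a := 2^i)
      rw [hpow]; exact hlt
    have hple : 2^i * c ≤ p0 := by
      have h1 : (2:ℕ)^i * (c + 1) ≤ 2^i * 2^(m-i) :=
        Nat.mul_le_mul_left _ (by omega)
      rw [hpow] at h1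
      rw [Nat.mul_add, mul_one] at h1
      omega
    rw [hexp, Prod.Lex.le_iff]
    rcases eq_or_lt_of_le hple with heq | hlt2
    · right
      exact ⟨heq, by rw [heq, hQ0]⟩
    · left; exact hlt2
  have hmax : ((Ppoly m i).support.image expPair).max
      = (toLex (p0, 2^i - 1) : ℕ ×ₗ ℕ) := by
    apply le_antisymm
    · apply Finset.max_le
      intro b hb
      rw [Finset.mem_image] at hb
      obtain ⟨e, he, rfl⟩ := hb
      obtain ⟨p, hp, rfl⟩ := hsup e he
      exact_mod_cast hle p hp
    · have : expPair (d p0) = toLex (p0, 2^i - 1) := by rw [hexp, hQ0]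
      exact this ▸ Finset.le_max (Finset.mem_image_of_mem _ hsupmem)
  refine ⟨hgoal1 ▸ hsupmem, ?_⟩
  rw [leadExp, hmax]
  rfl
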